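/- For every integer k ≥ 0, the 4×4 matrix M_k with rows (−(k−2)(k+1)/(4k−2), (k−1)(k−2)(k+1)/(4k−2), (k+1)/(4k−2), −1−(k−1)(k+1)/(4k−2)); (−k, k(k+1), 1, −k−1); (k(k+3)/(4k+6), k(k+2)(k+3)/(4k+6), k/(4k+6), −1+k(k+2)/(4k+6)); (k+1, k(k+1), 1, k) has determinant det M_k = −(2k+1)²; in particular M_k is invertible for every integer k ≥ 0. -/

import Mathlib

noncomputable section

/-- The matrix `M_k` whose rows are the coordinate blocks of the four explicit
eigenvectors of the linearized Stokes operator `L₀` (eigenvalues `k−1`, `k+1`,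
`−k−2`, `−k`) within the invariant subspace generated by a degree-`k` spherical
harmonic. -/
def Mk (k : ℕ) : Matrix (Fin 4) (Fin 4) ℝ :=
  Matrix.of
    ![![-(((k : ℝ) - 2) * ((k : ℝ) + 1) / (4 * (k : ℝ) - 2)),
        ((k : ℝ) - 1) * ((k : ℝ) - 2) * ((k : ℝ) + 1) / (4 * (k : ℝ) - 2),
        ((k : ℝ) + 1) / (4 * (k : ℝ) - 2),
        -1 - ((k : ℝ) - 1) * ((k : ℝ) + 1) / (4 * (k : ℝ) - 2)],
      ![-(k : ℝ), (k : ℝ) * ((k : ℝ) + 1), 1, -(k : ℝ) - 1],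
      ![(k : ℝ) * ((k : ℝ) + 3) / (4 * (k : ℝ) + 6),
        (k : ℝ) * ((k : ℝ) + 2) * ((k : ℝ) + 3) / (4 * (k : ℝ) + 6),
        (k : ℝ) / (4 * (k : ℝ) + 6),
        -1 + (k : ℝ) * ((k : ℝ) + 2) / (4 * (k : ℝ) + 6)],
      ![(k : ℝ) + 1, (k : ℝ) * ((k : ℝ) + 1), 1, (k : ℝ)]]

set_option maxHeartbeats 800000 in
lemma det4 (a b c d e f g h i j l m n o p q : ℝ) :
    (Matrix.of ![![a,b,c,d],![e,f,g,h],![i,j,l,m],![n,o,p,q]]).det =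
      a*(f*(l*q-m*p)-g*(j*q-m*o)+h*(j*p-l*o))
      - b*(e*(l*q-m*p)-g*(i*q-m*n)+h*(i*p-l*n))
      + c*(e*(j*q-m*o)-f*(i*q-m*n)+h*(i*o-j*n))
      - d*(e*(j*p-l*o)-f*(i*p-l*n)+g*(i*o-j*n)) := by
  simp [Matrix.det_succ_row_zero, Fin.sum_univ_succ, Fin.succAbove, Matrix.det_fin_three,
    Fin.castSucc, Fin.castAdd, Fin.castLE, Fin.succ]
  ring

lemma Mk_det_eq (k : ℕ) : (Mk k).det = -(2 * (k : ℝ) + 1) ^ 2 := by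
  have h1 : (4 * (k : ℝ) - 2) ≠ 0 := by
    rcases Nat.eq_zero_or_pos k with h | h
    · norm_num [h]
    · have : (1 : ℝ) ≤ (k : ℝ) := by exact_mod_cast h
      nlinarith
  have h2 : (4 * (k : ℝ) + 6) ≠ 0 := by positivity
  rw [Mk, det4]
  field_simp
  ring_nf
  have h3 : (-2 + (k : ℝ) * 4) ≠ 0 := by intro h; apply h1; linarith
  field_simp
  ring

/-- `det M_k = −(2k+1)²`; in particular `M_k` is invertible for every `k ≥ 0`. -/
theorem Mk_det (k : ℕ) :
    (Mk k).det = -(2 * (k : ℝ) + 1) ^ 2 ∧ IsUnit (Mk k).det := by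
  refine ⟨Mk_det_eq k, ?_⟩
  rw [Mk_det_eq k]
  have : (2 * (k : ℝ) + 1) ^ 2 ≠ 0 := by positivity
  exact (isUnit_iff_ne_zero).2 (by simpa using neg_ne_zero.2 this)
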